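/- arXiv:2306.10253 — 6 statements merged into one kernel-verified Lean document; each statement's English description precedes it below -/
import Mathlib

section
/- If A and B are n×n matrices over a field F, then for every positive integer k, rank((A+B)^k) ≤ k·rank(B) + rank(A^k). -/
open Matrix

lemma matrix_rank_add_le {F : Type*} [Field F] {n : ℕ} (A B : Matrix (Fin n) (Fin n) F) :
    (A + B).rank ≤ A.rank + B.rank := by
  simp only [Matrix.rank]
  have h : LinearMap.range (A + B).mulVecLin ≤
      LinearMap.range A.mulVecLin ⊔ LinearMap.range B.mulVecLin := by
    rintro x ⟨v, rfl⟩
    simp only [Matrix.mulVecLin_add, LinearMap.add_apply]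
    exact Submodule.add_mem_sup ⟨v, rfl⟩ ⟨v, rfl⟩
  calc _ ≤ Module.finrank F ↥(LinearMap.range A.mulVecLin ⊔ LinearMap.range B.mulVecLin) :=
        Submodule.finrank_mono h
    _ ≤ _ := by
        rw [← Submodule.finrank_sup_add_finrank_inf_eq]
        exact Nat.le_add_right _ _

/-- If `A` and `B` are `n×n` matrices over a field `F`, then for every positive integer `k`,
`rank((A+B)^k) ≤ k·rank(B) + rank(A^k)`. -/
theorem stmt_1 {F : Type*} [Field F] {n : ℕ} (A B : Matrix (Fin n) (Fin n) F)
    (k : ℕ) (hk : 0 < k) :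
    ((A + B) ^ k).rank ≤ k * B.rank + (A ^ k).rank := by
  have key : ∀ j, j ≤ k → (((A + B) ^ j) * A ^ (k - j)).rank ≤ j * B.rank + (A ^ k).rank := by
    intro j
    induction j with
    | zero => intro _; simp
    | succ j ih =>
      intro hj
      have hj' : j ≤ k := Nat.le_of_succ_le hj
      have heq : ((A + B) ^ (j + 1)) * A ^ (k - (j + 1)) =
          ((A + B) ^ j) * A ^ (k - j) + ((A + B) ^ j) * (B * A ^ (k - (j + 1))) := by
        rw [pow_succ, mul_assoc, add_mul, mul_add]
        congr 1
        rw [← pow_succ']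
        congr 2
        omega
      rw [heq]
      calc (((A + B) ^ j) * A ^ (k - j) + ((A + B) ^ j) * (B * A ^ (k - (j + 1)))).rank
          ≤ (((A + B) ^ j) * A ^ (k - j)).rank + (((A + B) ^ j) * (B * A ^ (k - (j + 1)))).rank :=
            matrix_rank_add_le _ _
        _ ≤ (j * B.rank + (A ^ k).rank) + B.rank := by
            refine add_le_add (ih hj') ?_
            calc (((A + B) ^ j) * (B * A ^ (k - (j + 1)))).rank
                ≤ (B * A ^ (k - (j + 1))).rank := Matrix.rank_mul_le_right _ _
              _ ≤ B.rank := Matrix.rank_mul_le_left _ _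
        _ = (j + 1) * B.rank + (A ^ k).rank := by ring
  have := key k le_rfl
  simpa using this
end

section
/- Let A be an n×n matrix over an algebraically closed field, λ an eigenvalue of A with Jordan block sizes k_{λ,1} ≥ ... ≥ k_{λ,m} (largest m, padded with zeros), and let B be an n×n matrix of rank at most m. If k_{λ,m} > 0, then rank((A + B - λI)^{k_{λ,m}}) ≤ n - alg_λ(A) + Σ_{j=1}^{m} k_{λ,j}. -/
open Polynomial Matrix Module

section helpers
variable {F : Type*} [Field F] {n : ℕ}

lemma myRankAddLe (A B : Matrix (Fin n) (Fin n) F) : (A + B).rank ≤ A.rank + B.rank := by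
  rw [Matrix.rank, Matrix.rank, Matrix.rank, Matrix.mulVecLin_add]
  refine le_trans (Submodule.finrank_mono ?_) (Submodule.finrank_add_le_finrank_add_finrank _ _)
  rintro x ⟨v, rfl⟩
  exact Submodule.mem_sup.2 ⟨A.mulVecLin v, ⟨v, rfl⟩, B.mulVecLin v, ⟨v, rfl⟩, rfl⟩

lemma myPowPerturb (N B : Matrix (Fin n) (Fin n) F) (p : ℕ) :
    ((N + B) ^ p - N ^ p).rank ≤ p * B.rank := by
  induction p with
  | zero => simp
  | succ p ih =>
      have key : (N + B) ^ (p + 1) - N ^ (p + 1)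
          = (N + B) * ((N + B) ^ p - N ^ p) + B * N ^ p := by
        rw [pow_succ', pow_succ', mul_sub, add_mul N B (N ^ p)]
        abel
      rw [key]
      calc ((N + B) * ((N + B) ^ p - N ^ p) + B * N ^ p).rank
          ≤ ((N + B) * ((N + B) ^ p - N ^ p)).rank + (B * N ^ p).rank := myRankAddLe _ _
        _ ≤ ((N + B) ^ p - N ^ p).rank + B.rank :=
            Nat.add_le_add (Matrix.rank_mul_le_right _ _) (Matrix.rank_mul_le_left _ _)
        _ ≤ p * B.rank + B.rank := Nat.add_le_add_right ih _
        _ = (p + 1) * B.rank := by ring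

lemma myRankPerturb (N B : Matrix (Fin n) (Fin n) F) (p : ℕ) :
    ((N + B) ^ p).rank ≤ (N ^ p).rank + p * B.rank := by
  have : (N + B) ^ p = N ^ p + ((N + B) ^ p - N ^ p) := by abel
  rw [this]
  exact le_trans (myRankAddLe _ _) (Nat.add_le_add_left (myPowPerturb N B p) _)

lemma myMulVecLinPow (N : Matrix (Fin n) (Fin n) F) (p : ℕ) :
    (N ^ p).mulVecLin = N.mulVecLin ^ p := by
  induction p with
  | zero => simp [Matrix.mulVecLin_one]; rfl
  | succ p ih =>
      rw [pow_succ, pow_succ, Matrix.mulVecLin_mul, ih, Module.End.mul_eq_comp]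

lemma myCharpolySub (A : Matrix (Fin n) (Fin n) F) (lam : F) :
    (A - lam • (1 : Matrix (Fin n) (Fin n) F)).charpoly = A.charpoly.comp (X + C lam) := by
  rw [Matrix.charpoly, Matrix.charpoly]
  have : A.charmatrix.det.comp (X + C lam)
      = ((eval₂RingHom C (X + C lam)) A.charmatrix.det) := rfl
  rw [this, RingHom.map_det]
  congr 1
  ext i j
  by_cases h : i = j
  · subst h
    simp [Matrix.charmatrix_apply_eq, Matrix.sub_apply, Matrix.smul_apply, Matrix.one_apply,
      eval₂_sub, map_sub, sub_sub_eq_add_sub]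
  · simp [Matrix.charmatrix_apply_ne _ _ _ h, Matrix.sub_apply, Matrix.smul_apply,
      Matrix.one_apply_ne h]

lemma myAlgMult (N : Matrix (Fin n) (Fin n) F) :
    (N ^ n).rank + N.charpoly.natTrailingDegree = n := by
  set φ : Module.End F (Fin n → F) := N.mulVecLin with hφdef
  have hφ : φ.charpoly = N.charpoly := by
    have h1 : LinearMap.toMatrix' φ = N := by
      rw [hφdef, ← Matrix.toLin'_apply', LinearMap.toMatrix'_toLin']
    rw [← LinearMap.charpoly_toMatrix φ (Pi.basisFun F (Fin n)),
      LinearMap.toMatrix_eq_toMatrix', h1]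
  have h2 : φ.maxGenEigenspace 0 = LinearMap.ker ((N ^ n).mulVecLin) := by
    rw [Module.End.maxGenEigenspace_eq_genEigenspace_finrank, Module.finrank_pi,
      Fintype.card_fin, Module.End.genEigenspace_nat, zero_smul, sub_zero, myMulVecLinPow]
  have h3 := LinearMap.finrank_maxGenEigenspace_zero_eq φ
  rw [hφ, h2] at h3
  have h4 := LinearMap.finrank_range_add_finrank_ker ((N ^ n).mulVecLin)
  rw [Module.finrank_pi, Fintype.card_fin] at h4
  rw [Matrix.rank, ← h3]
  convert h4 using 2

end helpers


/-- `k` is the nonincreasing, zero-padded sequence of the sizes of the Jordan blocks of `A`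
for the eigenvalue `lam` (indexed from `0`, so `k 0 = k_{λ,1}`), characterized by the
standard rank identities `rank((A-λI)^j) = n - ∑_{i<n} min(kᵢ, j)` for all `j`. -/
def JordanSizes {F : Type*} [Field F] {n : ℕ} (A : Matrix (Fin n) (Fin n) F) (lam : F)
    (k : ℕ → ℕ) : Prop :=
  Antitone k ∧ (∀ i, n ≤ i → k i = 0) ∧
    ∀ j : ℕ, ((A - lam • (1 : Matrix (Fin n) (Fin n) F)) ^ j).rank
      = n - ∑ i ∈ Finset.range n, min (k i) j

/-- If `λ` is an eigenvalue of `A` over an algebraically closed field with Jordan block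
sizes `k 0 ≥ k 1 ≥ ⋯` (so the `m`-th size `k_{λ,m}` is `k (m-1)`), `B` has rank at most `m`,
and `k (m-1) > 0`, then
`rank((A + B - λI)^(k (m-1))) ≤ n - alg_λ(A) + ∑_{j=1}^m k_{λ,j}`. -/
theorem stmt_6 {F : Type*} [Field F] [IsAlgClosed F] {n : ℕ}
    (A B : Matrix (Fin n) (Fin n) F) (m : ℕ) (hm : 0 < m) (hB : B.rank ≤ m)
    (lam : F) (heig : A.charpoly.IsRoot lam)
    (k : ℕ → ℕ) (hk : JordanSizes A lam k) (hkm : 0 < k (m - 1)) :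
    ((A + B - lam • (1 : Matrix (Fin n) (Fin n) F)) ^ (k (m - 1))).rank
      ≤ n - A.charpoly.rootMultiplicity lam + ∑ j ∈ Finset.range m, k j := by
  obtain ⟨hanti, hzero, hrank⟩ := hk
  set N := A - lam • (1 : Matrix (Fin n) (Fin n) F) with hN
  set p := k (m - 1) with hp
  set alg := A.charpoly.rootMultiplicity lam with halg
  -- m ≤ n
  have hmn : m ≤ n := by
    by_contra h
    exact absurd (hzero (m - 1) (by omega)) (by omega)
  -- rewrite the matrix
  have hmat : A + B - lam • (1 : Matrix (Fin n) (Fin n) F) = N + B := by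
    rw [hN]; abel
  -- algebraic multiplicity
  have halgeq : alg = N.charpoly.natTrailingDegree := by
    rw [halg, hN, myCharpolySub, Polynomial.rootMultiplicity_eq_natTrailingDegree]
  have hpow := myAlgMult N
  rw [← halgeq] at hpow
  -- alg ≤ sum of k
  have hrn := hrank n
  have hsum_le : ∑ i ∈ Finset.range n, min (k i) n ≤ ∑ i ∈ Finset.range n, k i :=
    Finset.sum_le_sum fun i _ => min_le_left _ _
  have halg_le : alg ≤ ∑ i ∈ Finset.range n, k i := by omega
  -- split ∑_{i<n} k i
  have hsplit : ∑ i ∈ Finset.range n, k i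
      = ∑ i ∈ Finset.range m, k i + ∑ i ∈ Finset.Ico m n, k i := by
    rw [← Finset.sum_range_add_sum_Ico _ hmn]
  -- ∑_{i<n} min (k i) p = m * p + ∑_{i ∈ [m,n)} k i
  have hX : ∑ i ∈ Finset.range n, min (k i) p
      = p * m + ∑ i ∈ Finset.Ico m n, k i := by
    rw [← Finset.sum_range_add_sum_Ico _ hmn]
    congr 1
    · rw [Finset.sum_congr rfl (fun i hi => ?_), Finset.sum_const, Finset.card_range,
        smul_eq_mul, Nat.mul_comm]
      have : p ≤ k i := hanti (by simp at hi; omega)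
      omega
    · refine Finset.sum_congr rfl (fun i hi => ?_)
      simp only [Finset.mem_Ico] at hi
      have : k i ≤ p := hanti (by omega)
      omega
  -- lower bound on ∑_{j<m} k j
  have hS : p * m ≤ ∑ j ∈ Finset.range m, k j := by
    calc p * m = ∑ _j ∈ Finset.range m, p := by
          rw [Finset.sum_const, Finset.card_range, smul_eq_mul, Nat.mul_comm]
      _ ≤ ∑ j ∈ Finset.range m, k j :=
          Finset.sum_le_sum fun i hi => hanti (by simp at hi; omega)
  -- rank bound
  have hrb : ((N + B) ^ p).rank ≤ (N ^ p).rank + p * m :=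
    le_trans (myRankPerturb N B p)
      (Nat.add_le_add_left (Nat.mul_le_mul_left p hB) _)
  have hNp := hrank p
  rw [hmat]
  omega
end

section
/- Let A be an n×n matrix over a field F and B an n×n matrix over F with rank(B) ≤ m, and let q be the characteristic polynomial of A+B. Then for each eigenvalue λ of A (in an algebraic closure of F), m_λ(q) ≥ alg_λ(A) − Σ_{j=1}^{m} k_{λ,j}, where k_{λ,1} ≥ ... ≥ k_{λ,m} are the sizes of the largest m Jordan blocks of A for λ (padded with zeros). -/
open Polynomial Matrix Module

section Aux

variable {K : Type*} [Field K] {n : ℕ}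

/-- Shift lemma: `charpoly (M - λ•1) = (charpoly M).comp (X + C λ)`. -/
lemma aux_charpoly_sub_smul_one (M : Matrix (Fin n) (Fin n) K) (lam : K) :
    (M - lam • (1 : Matrix (Fin n) (Fin n) K)).charpoly
      = M.charpoly.comp (X + C lam) := by
  have h : charmatrix (M - lam • (1 : Matrix (Fin n) (Fin n) K))
      = (charmatrix M).map ((aeval (X + C lam : K[X])).toRingHom : K[X] →+* K[X]) := by
    ext i j
    rcases eq_or_ne i j with rfl | hij
    · simp only [charmatrix_apply_eq, Matrix.map_apply, AlgHom.toRingHom_eq_coe,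
        RingHom.coe_coe, map_sub, aeval_X, aeval_C, Matrix.sub_apply, Matrix.smul_apply,
        Matrix.one_apply_eq, smul_eq_mul, mul_one]
      rw [Polynomial.algebraMap_eq]
      ring
    · simp only [Matrix.sub_apply, Matrix.smul_apply, Matrix.one_apply_ne hij, smul_eq_mul,
        mul_zero, sub_zero, charmatrix_apply_ne _ _ _ hij, Matrix.map_apply,
        AlgHom.toRingHom_eq_coe, RingHom.coe_coe, map_neg, aeval_C]
      rw [Polynomial.algebraMap_eq]
  rw [Matrix.charpoly, h, ← RingHom.mapMatrix_apply, ← RingHom.map_det, Matrix.charpoly]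
  simp only [AlgHom.toRingHom_eq_coe, RingHom.coe_coe]
  rw [comp_eq_aeval]

/-- mulVecLin of a power. -/
lemma aux_mulVecLin_pow (M : Matrix (Fin n) (Fin n) K) (p : ℕ) :
    (M ^ p).mulVecLin = M.mulVecLin ^ p := by
  induction p with
  | zero => rw [pow_zero, pow_zero, Matrix.mulVecLin_one]; rfl
  | succ p ih =>
      rw [pow_succ, pow_succ, Matrix.mulVecLin_mul, ih]
      rfl

/-- The characteristic polynomial of `mulVecLin M` is the matrix charpoly. -/
lemma aux_charpoly_mulVecLin (M : Matrix (Fin n) (Fin n) K) :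
    (LinearMap.charpoly M.mulVecLin) = M.charpoly := by
  have h := LinearMap.charpoly_toMatrix M.mulVecLin (Pi.basisFun K (Fin n))
  rw [← h, LinearMap.toMatrix_eq_toMatrix', ← Matrix.toLin'_apply', LinearMap.toMatrix'_toLin']

/-- Root multiplicity as dimension of the maximal generalized eigenspace. -/
lemma aux_rootMultiplicity_eq (M : Matrix (Fin n) (Fin n) K) (lam : K) :
    M.charpoly.rootMultiplicity lam
      = finrank K (Module.End.maxGenEigenspace ((M - lam • (1 : Matrix (Fin n) (Fin n) K)).mulVecLin) 0) := by
  rw [rootMultiplicity_eq_natTrailingDegree, ← aux_charpoly_sub_smul_one,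
    ← aux_charpoly_mulVecLin, LinearMap.finrank_maxGenEigenspace_zero_eq]

lemma aux_finrank_ker_rank (M : Matrix (Fin n) (Fin n) K) :
    M.rank + finrank K (LinearMap.ker M.mulVecLin) = n := by
  have h := LinearMap.finrank_range_add_finrank_ker M.mulVecLin
  rw [Module.finrank_pi, Fintype.card_fin] at h
  rw [Matrix.rank]
  exact h

/-- Lower bound: `n ≤ mult + rank((M-λ)^p)` for every `p`. -/
lemma aux_mult_ge (M : Matrix (Fin n) (Fin n) K) (lam : K) (p : ℕ) :
    n ≤ M.charpoly.rootMultiplicity lam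
      + ((M - lam • (1 : Matrix (Fin n) (Fin n) K)) ^ p).rank := by
  rw [aux_rootMultiplicity_eq M lam]
  set N := M - lam • (1 : Matrix (Fin n) (Fin n) K) with hN
  have hker : finrank K (LinearMap.ker ((N ^ p).mulVecLin))
      ≤ finrank K (Module.End.maxGenEigenspace N.mulVecLin 0) := by
    apply Submodule.finrank_mono
    intro x hx
    rw [LinearMap.mem_ker, aux_mulVecLin_pow] at hx
    rw [Module.End.mem_maxGenEigenspace]
    exact ⟨p, by simpa using hx⟩
  have h2 := aux_finrank_ker_rank (N ^ p)
  omega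

/-- Upper bound at `p = n`. -/
lemma aux_mult_le (M : Matrix (Fin n) (Fin n) K) (lam : K) :
    M.charpoly.rootMultiplicity lam
      + ((M - lam • (1 : Matrix (Fin n) (Fin n) K)) ^ n).rank ≤ n := by
  rw [aux_rootMultiplicity_eq M lam]
  set N := M - lam • (1 : Matrix (Fin n) (Fin n) K) with hN
  have hker : finrank K (Module.End.maxGenEigenspace N.mulVecLin 0)
      ≤ finrank K (LinearMap.ker ((N ^ n).mulVecLin)) := by
    apply Submodule.finrank_mono
    intro x hx
    rw [Module.End.maxGenEigenspace_eq_genEigenspace_finrank] at hx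
    rw [Module.finrank_pi, Fintype.card_fin] at hx
    rw [Module.End.genEigenspace_nat] at hx
    rw [LinearMap.mem_ker, aux_mulVecLin_pow]
    simpa using hx
  have h2 := aux_finrank_ker_rank (N ^ n)
  omega

/-- Rank is subadditive. -/
lemma aux_rank_add_le (A B : Matrix (Fin n) (Fin n) K) :
    (A + B).rank ≤ A.rank + B.rank := by
  have hle : LinearMap.range (A + B).mulVecLin
      ≤ LinearMap.range A.mulVecLin ⊔ LinearMap.range B.mulVecLin := by
    rintro x ⟨v, rfl⟩
    rw [Matrix.mulVecLin_add]
    exact Submodule.mem_sup.2 ⟨A.mulVecLin v, ⟨v, rfl⟩, B.mulVecLin v, ⟨v, rfl⟩, rfl⟩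
  have h1 : finrank K (LinearMap.range (A + B).mulVecLin)
      ≤ finrank K (LinearMap.range A.mulVecLin ⊔ LinearMap.range B.mulVecLin : Submodule K _) :=
    Submodule.finrank_mono hle
  have h2 := Submodule.finrank_sup_add_finrank_inf_eq
    (LinearMap.range A.mulVecLin) (LinearMap.range B.mulVecLin)
  rw [Matrix.rank, Matrix.rank, Matrix.rank]
  omega

/-- `(N+B)^p = N^p + E` with `rank E ≤ p * rank B`. -/
lemma aux_perturb (N B : Matrix (Fin n) (Fin n) K) (p : ℕ) :
    ∃ E : Matrix (Fin n) (Fin n) K, (N + B) ^ p = N ^ p + E ∧ E.rank ≤ p * B.rank := by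
  induction p with
  | zero => exact ⟨0, by simp, by simp⟩
  | succ p ih =>
      obtain ⟨E, hE, hr⟩ := ih
      refine ⟨N ^ p * B + E * (N + B), ?_, ?_⟩
      · rw [pow_succ, hE, pow_succ, add_mul, mul_add, add_assoc]
      · calc (N ^ p * B + E * (N + B)).rank
            ≤ (N ^ p * B).rank + (E * (N + B)).rank := aux_rank_add_le _ _
          _ ≤ B.rank + E.rank := by
              gcongr
              · exact Matrix.rank_mul_le_right _ _
              · exact Matrix.rank_mul_le_left _ _
          _ ≤ B.rank + p * B.rank := by gcongr
          _ = (p + 1) * B.rank := by ring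

/-- `rank ((N+B)^p) ≤ rank (N^p) + p * rank B`. -/
lemma aux_rank_pow_perturb (N B : Matrix (Fin n) (Fin n) K) (p : ℕ) :
    ((N + B) ^ p).rank ≤ (N ^ p).rank + p * B.rank := by
  obtain ⟨E, hE, hr⟩ := aux_perturb N B p
  rw [hE]
  exact le_trans (aux_rank_add_le _ _) (by omega)

/-- Rank does not increase under entrywise application of an algebra map of fields. -/
lemma aux_rank_map_le {F : Type*} [Field F] [Algebra F K] (B : Matrix (Fin n) (Fin n) F) :
    (B.map (algebraMap F K)).rank ≤ B.rank := by
  classical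
  set σ := algebraMap F K with hσ
  set V : Submodule F (Fin n → F) := Submodule.span F (Set.range Bᵀ) with hV
  haveI : FiniteDimensional F V := FiniteDimensional.span_of_finite F (Set.finite_range _)
  set r := finrank F V with hr
  have hrank : B.rank = r := Matrix.rank_eq_finrank_span_cols B
  let b : Basis (Fin r) F V := Module.finBasis F V
  let L : (Fin n → F) →ₗ[F] (Fin n → K) := (Algebra.linearMap F K).compLeft (Fin n)
  set w : Fin r → (Fin n → K) := fun i => L ((b i : Fin n → F)) with hw
  have hcols : ∀ j, (B.map σ)ᵀ j ∈ Submodule.span K (Set.range w) := by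
    intro j
    have h1 : (Bᵀ j) ∈ V := Submodule.subset_span ⟨j, rfl⟩
    have h2 : (Bᵀ j) ∈ Submodule.span F (Set.range (fun i => ((b i : V) : Fin n → F))) := by
      have hx : (⟨Bᵀ j, h1⟩ : V) ∈ Submodule.span F (Set.range b) := by
        rw [b.span_eq]; trivial
      have := Submodule.mem_map_of_mem (f := V.subtype) hx
      rw [Submodule.map_span, ← Set.range_comp] at this
      exact this
    have h3 : L (Bᵀ j) ∈ Submodule.span F (Set.range w) := by
      have := Submodule.mem_map_of_mem (f := L) h2
      rw [Submodule.map_span, ← Set.range_comp] at this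
      exact this
    have h4 : Submodule.span F (Set.range w)
        ≤ Submodule.restrictScalars F (Submodule.span K (Set.range w)) :=
      Submodule.span_le_restrictScalars F K _
    have h5 : (B.map σ)ᵀ j = L (Bᵀ j) := by
      funext i; rfl
    rw [h5]
    exact h4 h3
  have hle : Submodule.span K (Set.range (B.map σ)ᵀ) ≤ Submodule.span K (Set.range w) :=
    Submodule.span_le.2 (by rintro x ⟨j, rfl⟩; exact hcols j)
  calc (B.map σ).rank = finrank K (Submodule.span K (Set.range (B.map σ)ᵀ)) :=
        Matrix.rank_eq_finrank_span_cols _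
    _ ≤ finrank K (Submodule.span K (Set.range w)) := Submodule.finrank_mono hle
    _ ≤ Fintype.card (Fin r) := finrank_range_le_card w
    _ = r := Fintype.card_fin r
    _ = B.rank := hrank.symm

end Aux

section Main

variable {K : Type*} [Field K] {n : ℕ}

lemma aux_main (A' B' : Matrix (Fin n) (Fin n) K) (m : ℕ) (hBr : B'.rank ≤ m)
    (lam : K) (k : ℕ → ℕ) (hanti : Antitone k)
    (hrank : ∀ j : ℕ, ((A' - lam • (1 : Matrix (Fin n) (Fin n) K)) ^ j).rank
      = n - ∑ i ∈ Finset.range n, min (k i) j) :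
    ((A' + B').charpoly).rootMultiplicity lam
      ≥ (A'.charpoly).rootMultiplicity lam - ∑ j ∈ Finset.range m, k j := by
  classical
  set p := k m with hp
  set N := A' - lam • (1 : Matrix (Fin n) (Fin n) K) with hN
  have hMN : (A' + B') - lam • (1 : Matrix (Fin n) (Fin n) K) = N + B' := by
    rw [hN]; abel
  set mq := ((A' + B').charpoly).rootMultiplicity lam with hmq
  set alg := (A'.charpoly).rootMultiplicity lam with halg
  set S := ∑ j ∈ Finset.range m, k j with hS
  set T := ∑ i ∈ Finset.range n, min (k i) p with hT
  set U := ∑ i ∈ Finset.range n, min (k i) n with hU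
  have h1 : n ≤ mq + ((N + B') ^ p).rank := by
    rw [hmq, ← hMN]
    exact aux_mult_ge _ _ p
  have h2 : ((N + B') ^ p).rank ≤ (N ^ p).rank + p * m := by
    refine le_trans (aux_rank_pow_perturb N B' p) ?_
    have := Nat.mul_le_mul_left p hBr
    omega
  have h3 : (N ^ p).rank = n - T := hrank p
  have h4a : n ≤ alg + (N ^ n).rank := aux_mult_ge A' lam n
  have h4b : alg + (N ^ n).rank ≤ n := aux_mult_le A' lam
  have h5 : (N ^ n).rank = n - U := hrank n
  have hpm : m * p ≤ S := by
    rw [hS]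
    calc m * p = ∑ _j ∈ Finset.range m, p := by
          rw [Finset.sum_const, Finset.card_range, smul_eq_mul]
      _ ≤ ∑ j ∈ Finset.range m, k j :=
          Finset.sum_le_sum fun j hj => hanti (Nat.le_of_lt (Finset.mem_range.1 hj))
  have hpm' : p * m ≤ S := by rw [mul_comm] at hpm; exact hpm
  set pm := p * m with hpm2
  rcases le_or_gt m n with hmn | hmn
  · -- m ≤ n : the key combinatorial inequality
    have hsplitsum : ∀ f : ℕ → ℕ, ∑ i ∈ Finset.range n, f i
        = ∑ i ∈ Finset.range m, f i + ∑ i ∈ Finset.Ico m n, f i := by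
      intro f
      rw [Finset.range_eq_Ico, Finset.range_eq_Ico]
      exact (Finset.sum_Ico_consecutive f (Nat.zero_le m) hmn).symm
    have ha : ∑ i ∈ Finset.range m, min (k i) n + m * p
        ≤ ∑ i ∈ Finset.range m, min (k i) p + ∑ i ∈ Finset.range m, k i := by
      calc ∑ i ∈ Finset.range m, min (k i) n + m * p
          = ∑ i ∈ Finset.range m, (min (k i) n + p) := by
            rw [Finset.sum_add_distrib, Finset.sum_const, Finset.card_range, smul_eq_mul]
        _ ≤ ∑ i ∈ Finset.range m, (min (k i) p + k i) := by
            refine Finset.sum_le_sum fun i hi => ?_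
            have hki : p ≤ k i := hanti (Nat.le_of_lt (Finset.mem_range.1 hi))
            omega
        _ = ∑ i ∈ Finset.range m, min (k i) p + ∑ i ∈ Finset.range m, k i := by
            rw [Finset.sum_add_distrib]
    have hb : ∑ i ∈ Finset.Ico m n, min (k i) n ≤ ∑ i ∈ Finset.Ico m n, min (k i) p := by
      refine Finset.sum_le_sum fun i hi => ?_
      have hki : k i ≤ p := hanti (Finset.mem_Ico.1 hi).1
      omega
    have e1 : U = ∑ i ∈ Finset.range m, min (k i) n + ∑ i ∈ Finset.Ico m n, min (k i) n := by
      rw [hU]; exact hsplitsum _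
    have e2 : T = ∑ i ∈ Finset.range m, min (k i) p + ∑ i ∈ Finset.Ico m n, min (k i) p := by
      rw [hT]; exact hsplitsum _
    have hsplit : U + pm ≤ T + S := by
      rw [hpm2, mul_comm p m]
      omega
    omega
  · -- n < m : the right-hand side is zero
    have hS1 : U ≤ ∑ i ∈ Finset.range n, k i :=
      Finset.sum_le_sum fun i _ => min_le_left _ _
    have hS2 : ∑ i ∈ Finset.range n, k i ≤ S := by
      rw [hS]
      exact Finset.sum_le_sum_of_subset (Finset.range_subset_range.2 hmn.le)
    omega

end Main

/-- If `A, B` are `n×n` matrices over a field `F` with `rank B ≤ m`, and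
`q` is the characteristic polynomial of `A + B`, then for every eigenvalue `λ` of `A`
in the algebraic closure of `F`,
`m_λ(q) ≥ alg_λ(A) − ∑_{j=1}^m k_{λ,j}` where the `k_{λ,j}` are the Jordan block sizes
of `A` at `λ` in nonincreasing order (zero-padded). -/
theorem stmt_7 {F : Type*} [Field F] {n : ℕ}
    (A B : Matrix (Fin n) (Fin n) F) (m : ℕ) (hm : 0 < m) (hB : B.rank ≤ m)
    (q : Polynomial F) (hq : q = (A + B).charpoly)
    (lam : AlgebraicClosure F)
    (heig : ((A.map (algebraMap F (AlgebraicClosure F))).charpoly).IsRoot lam)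
    (k : ℕ → ℕ)
    (hk : JordanSizes (A.map (algebraMap F (AlgebraicClosure F))) lam k) :
    (q.map (algebraMap F (AlgebraicClosure F))).rootMultiplicity lam
      ≥ ((A.map (algebraMap F (AlgebraicClosure F))).charpoly).rootMultiplicity lam
        - ∑ j ∈ Finset.range m, k j := by
  obtain ⟨hanti, hzero, hrank⟩ := hk
  have hq' : q.map (algebraMap F (AlgebraicClosure F))
      = (A.map (algebraMap F (AlgebraicClosure F))
          + B.map (algebraMap F (AlgebraicClosure F))).charpoly := by
    rw [hq, ← Matrix.charpoly_map]
    congr 1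
    ext i j
    simp [Matrix.map_apply, Matrix.add_apply, map_add]
  have hBr : (B.map (algebraMap F (AlgebraicClosure F))).rank ≤ m :=
    le_trans (aux_rank_map_le B) hB
  rw [hq']
  exact aux_main _ _ m hBr lam k hanti hrank
end

section
/- Any nonzero eigenvalue λ of a square matrix M satisfies alg_λ(M) = alg_0(M − λI), and for any positive integer k, alg_0(M^k) = alg_0(M); moreover alg_0(M) ≥ n − rank(M) for an n×n matrix M over an algebraically closed field. -/
open Polynomial Matrix Module

section Aux

variable {F : Type*} [Field F] {n : ℕ}

private lemma charpoly_sub_smul_one' (M : Matrix (Fin n) (Fin n) F) (lam : F) :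
    (M - lam • (1 : Matrix (Fin n) (Fin n) F)).charpoly
      = M.charpoly.comp (X + C lam) := by
  rw [Matrix.charpoly, Matrix.charpoly, comp_eq_aeval, ← AlgHom.coe_toRingHom,
    RingHom.map_det]
  congr 1
  ext i j
  by_cases h : i = j
  · subst h
    simp [charmatrix_apply_eq, Matrix.sub_apply, Matrix.one_apply, Matrix.smul_apply]
    ring
  · simp [charmatrix_apply_ne _ _ _ h, Matrix.sub_apply, Matrix.one_apply_ne h,
      Matrix.smul_apply]

private lemma charpoly_mulVecLin' (M : Matrix (Fin n) (Fin n) F) :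
    M.charpoly = (M.mulVecLin).charpoly := by
  have := LinearMap.charpoly_toMatrix M.mulVecLin (Pi.basisFun F (Fin n))
  rw [← this]
  congr 1
  ext i j
  simp [LinearMap.toMatrix_apply, Matrix.mulVecLin_apply, Matrix.mulVec_single]

private lemma maxGen_pow' (φ : Module.End F (Fin n → F)) {k : ℕ} (hk : 0 < k) :
    (φ ^ k).maxGenEigenspace 0 = φ.maxGenEigenspace 0 := by
  ext x
  simp only [Module.End.mem_maxGenEigenspace, zero_smul, sub_zero, ← pow_mul]
  constructor
  · rintro ⟨m, hm⟩; exact ⟨k * m, hm⟩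
  · rintro ⟨m, hm⟩
    refine ⟨m, ?_⟩
    have hle : m ≤ k * m := Nat.le_mul_of_pos_left m hk
    have : k * m = (k * m - m) + m := by omega
    rw [this, pow_add, Module.End.mul_apply, hm, map_zero]

private lemma alg0_eq' (M : Matrix (Fin n) (Fin n) F) :
    M.charpoly.rootMultiplicity 0
      = finrank F (Module.End.maxGenEigenspace (M.mulVecLin) 0) := by
  rw [rootMultiplicity_eq_natTrailingDegree', charpoly_mulVecLin',
    LinearMap.finrank_maxGenEigenspace_zero_eq]

private lemma mulVecLin_pow' (M : Matrix (Fin n) (Fin n) F) (k : ℕ) :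
    (M ^ k).mulVecLin = M.mulVecLin ^ k := by
  induction k with
  | zero => simp [Matrix.mulVecLin_one]; rfl
  | succ k ih => rw [pow_succ, pow_succ, Matrix.mulVecLin_mul, ih]; rfl

end Aux

/-- For an `n×n` matrix `M` over an algebraically closed field:
any nonzero eigenvalue `λ` of `M` satisfies `alg_λ(M) = alg_0(M − λI)`;
for any positive integer `k`, `alg_0(M^k) = alg_0(M)`; and `alg_0(M) ≥ n − rank M`. -/
theorem stmt_8 {F : Type*} [Field F] [IsAlgClosed F] {n : ℕ}
    (M : Matrix (Fin n) (Fin n) F) (lam : F) (hlam : lam ≠ 0)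
    (heig : M.charpoly.IsRoot lam) :
    M.charpoly.rootMultiplicity lam
      = ((M - lam • (1 : Matrix (Fin n) (Fin n) F)).charpoly).rootMultiplicity 0
    ∧ (∀ k : ℕ, 0 < k →
        ((M ^ k).charpoly).rootMultiplicity 0 = M.charpoly.rootMultiplicity 0)
    ∧ M.charpoly.rootMultiplicity 0 ≥ n - M.rank := by
  refine ⟨?_, ?_, ?_⟩
  · rw [charpoly_sub_smul_one', Polynomial.rootMultiplicity_eq_rootMultiplicity]
  · intro k hk
    rw [alg0_eq', alg0_eq', mulVecLin_pow', maxGen_pow' _ hk]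
  · rw [alg0_eq']
    have hle : LinearMap.ker M.mulVecLin ≤ Module.End.maxGenEigenspace M.mulVecLin 0 := by
      intro x hx
      rw [Module.End.mem_maxGenEigenspace]
      exact ⟨1, by simpa using hx⟩
    have h1 := Submodule.finrank_mono hle
    have h2 := LinearMap.finrank_range_add_finrank_ker M.mulVecLin
    have h3 : finrank F (Fin n → F) = n := by simp
    have h4 : M.rank = finrank F (LinearMap.range M.mulVecLin) := rfl
    omega
end

section
/- For any n×n matrix C over a commutative ring and any 0 ≤ j ≤ n, the coefficient of x^j in the characteristic polynomial of C equals (−1)^{n−j} times the sum of all principal (n−j)×(n−j) minors of C. -/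
open Matrix Polynomial Finset

lemma aux_det_piecewise {R : Type*} [CommRing R] {n : ℕ} (C : Matrix (Fin n) (Fin n) R)
    (s : Finset (Fin n)) :
    Matrix.det (Matrix.of (s.piecewise (fun i => (Pi.single i 1 : Fin n → R[X]))
        (fun i => -((C.map Polynomial.C) i))))
      = (-1 : R[X]) ^ (n - s.card) *
        Polynomial.C ((C.submatrix (fun a : {x // x ∉ s} => (a : Fin n))
          (fun a : {x // x ∉ s} => (a : Fin n))).det) := by
  classical
  set N : Matrix (Fin n) (Fin n) R[X] :=
    Matrix.of (s.piecewise (fun i => (Pi.single i 1 : Fin n → R[X]))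
      (fun i => -((C.map Polynomial.C) i)))
  have hσ := Matrix.det_submatrix_equiv_self (Equiv.sumCompl (· ∈ s)) N
  have hblock : N.submatrix (Equiv.sumCompl (· ∈ s)) (Equiv.sumCompl (· ∈ s))
      = Matrix.fromBlocks 1 0
          (Matrix.of fun (a : {x // ¬ x ∈ s}) (b : {x // x ∈ s}) =>
            -Polynomial.C (C (a : Fin n) (b : Fin n)))
          (Matrix.of fun (a : {x // ¬ x ∈ s}) (b : {x // ¬ x ∈ s}) =>
            -Polynomial.C (C (a : Fin n) (b : Fin n))) := by
    refine Matrix.ext fun i j => ?_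
    rcases i with i | i <;> rcases j with j | j <;>
      simp only [submatrix_apply, Equiv.sumCompl_apply_inl, Equiv.sumCompl_apply_inr,
        fromBlocks_apply₁₁, fromBlocks_apply₁₂, fromBlocks_apply₂₁, fromBlocks_apply₂₂, N,
        Matrix.of_apply]
    · rw [s.piecewise_eq_of_mem _ _ i.2]
      by_cases h : (i : Fin n) = (j : Fin n)
      · simp [Pi.single_apply, h, Subtype.ext h, Matrix.one_apply]
      · have : i ≠ j := fun hh => h (congrArg _ hh)
        simp [Pi.single_apply, Ne.symm h, Matrix.one_apply, this]
    · rw [s.piecewise_eq_of_mem _ _ i.2]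
      have : (j : Fin n) ≠ (i : Fin n) := fun h => j.2 (h ▸ i.2)
      simp [Pi.single_apply, this]
    · rw [s.piecewise_eq_of_notMem _ _ i.2]; simp
    · rw [s.piecewise_eq_of_notMem _ _ i.2]; simp
  rw [← hσ, hblock, Matrix.det_fromBlocks_zero₁₂, Matrix.det_one, one_mul]
  have h4 : (Matrix.of fun (a : {x // ¬ x ∈ s}) (b : {x // ¬ x ∈ s}) =>
      -Polynomial.C (C (a : Fin n) (b : Fin n)))
      = -((C.submatrix (fun a : {x // x ∉ s} => (a : Fin n))
          (fun a : {x // x ∉ s} => (a : Fin n))).map Polynomial.C) := by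
    refine Matrix.ext fun a b => ?_; simp
  rw [h4, Matrix.det_neg, ← RingHom.mapMatrix_apply, RingHom.map_det]
  congr 2
  rw [Fintype.card_subtype_compl, Fintype.card_fin, Fintype.card_coe]

/-- For any `n×n` matrix `C` over a commutative ring and any `0 ≤ j ≤ n`, the coefficient
of `x^j` in the characteristic polynomial of `C` equals `(−1)^{n−j}` times the sum of all
principal `(n−j)×(n−j)` minors of `C`. -/
theorem stmt_9 {R : Type*} [CommRing R] {n : ℕ} (C : Matrix (Fin n) (Fin n) R)
    (j : ℕ) (hj : j ≤ n) :
    C.charpoly.coeff j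
      = (-1 : R) ^ (n - j) *
        ∑ I ∈ Finset.powersetCard (n - j) (Finset.univ : Finset (Fin n)),
          (C.submatrix (fun a : {x // x ∈ I} => (a : Fin n))
            (fun a : {x // x ∈ I} => (a : Fin n))).det := by
  classical
  set a : Fin n → Fin n → R[X] := fun i => (X : R[X]) • (Pi.single i 1 : Fin n → R[X]) with ha
  set b : Fin n → Fin n → R[X] := fun i => -((C.map Polynomial.C) i) with hb
  set e : Fin n → Fin n → R[X] := fun i => (Pi.single i 1 : Fin n → R[X]) with he
  set f := (Matrix.detRowAlternating :
      (Fin n → R[X]) [⋀^Fin n]→ₗ[R[X]] R[X]).toMultilinearMap with hf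
  have hch : C.charpoly = ∑ s : Finset (Fin n),
      Polynomial.monomial s.card
        ((-1 : R) ^ (n - s.card) *
          (C.submatrix (fun a : {x // x ∉ s} => (a : Fin n))
            (fun a : {x // x ∉ s} => (a : Fin n))).det) := by
    have h1 : charmatrix C = Matrix.of (a + b) := by
      refine Matrix.ext fun i k => ?_
      by_cases h : i = k <;>
        simp [charmatrix_apply, Pi.single_apply, h, Matrix.one_apply, diagonal_apply,
          sub_eq_add_neg, a, b]
    have h0 : C.charpoly = f (a + b) := by rw [Matrix.charpoly, h1]; rfl
    rw [h0, f.map_add_univ a b]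
    refine Finset.sum_congr rfl fun s _ => ?_
    have h2 : s.piecewise a b
        = s.piecewise (fun i => (X : R[X]) • (s.piecewise e b i)) (s.piecewise e b) := by
      funext i
      by_cases h : i ∈ s <;>
        simp [Finset.piecewise_eq_of_mem _ _ _, Finset.piecewise_eq_of_notMem, h, a, b, e]
    have h3 := f.map_piecewise_smul (fun _ => (X : R[X])) (s.piecewise e b) s
    have h5 : f (s.piecewise a b)
        = (X : R[X]) ^ s.card * Matrix.det (Matrix.of (s.piecewise e b)) := by
      rw [h2]
      exact (by simpa [Finset.prod_const, smul_eq_mul] using h3 :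
        f (s.piecewise (fun i => (X : R[X]) • (s.piecewise e b i)) (s.piecewise e b))
          = (X : R[X]) ^ s.card * f (s.piecewise e b))
    rw [h5, aux_det_piecewise]
    rw [show ((-1 : R[X]) ^ (n - s.card) *
        Polynomial.C ((C.submatrix (fun a : {x // x ∉ s} => (a : Fin n))
          (fun a : {x // x ∉ s} => (a : Fin n))).det))
      = Polynomial.C ((-1 : R) ^ (n - s.card) *
          (C.submatrix (fun a : {x // x ∉ s} => (a : Fin n))
            (fun a : {x // x ∉ s} => (a : Fin n))).det) by
        simp [_root_.map_mul, _root_.map_pow]]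
    rw [mul_comm, Polynomial.C_mul_X_pow_eq_monomial]
  rw [hch, Polynomial.finset_sum_coeff]
  simp only [Polynomial.coeff_monomial]
  rw [← Finset.sum_filter]
  have hps : (Finset.univ : Finset (Finset (Fin n))).filter (fun s => s.card = j)
      = Finset.powersetCard j (Finset.univ : Finset (Fin n)) := by
    rw [Finset.powersetCard_eq_filter, Finset.powerset_univ]
  rw [hps]
  have hcard : ∀ s ∈ Finset.powersetCard j (Finset.univ : Finset (Fin n)), s.card = j :=
    fun s hs => (Finset.mem_powersetCard.mp hs).2
  rw [Finset.sum_congr rfl (fun s hs => by rw [hcard s hs]), ← Finset.mul_sum]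
  congr 1
  refine Finset.sum_nbij' (fun s => sᶜ) (fun I => Iᶜ) ?_ ?_ ?_ ?_ ?_
  · intro s hs
    rw [Finset.mem_powersetCard_univ] at hs ⊢
    rw [Finset.card_compl, hs, Fintype.card_fin]
  · intro I hI
    rw [Finset.mem_powersetCard_univ] at hI ⊢
    rw [Finset.card_compl, hI, Fintype.card_fin, Nat.sub_sub_self hj]
  · intro s _; simp
  · intro I _; simp
  · intro s _
    have heq : (Equiv.subtypeEquivRight (fun x => (Finset.mem_compl : x ∈ sᶜ ↔ x ∉ s))) =
        (Equiv.subtypeEquivRight (fun x => Finset.mem_compl)) := rfl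
    rw [show (C.submatrix (fun a : {x // x ∈ sᶜ} => (a : Fin n))
        (fun a : {x // x ∈ sᶜ} => (a : Fin n)))
      = (C.submatrix (fun a : {x // x ∉ s} => (a : Fin n))
          (fun a : {x // x ∉ s} => (a : Fin n))).submatrix
        (Equiv.subtypeEquivRight (fun x => Finset.mem_compl))
        (Equiv.subtypeEquivRight (fun x => Finset.mem_compl)) from rfl]
    rw [Matrix.det_submatrix_equiv_self]
end

section
/- Let A be an n×n matrix over a field F whose rational canonical form has invariant factors p_1 | p_2 | ... | p_s, let m ≥ 1, and let q ∈ F[x] be monic of degree n with p_1·p_2···p_{max(s−m,0)} dividing q. Then there exists an n×n matrix B over F with rank(B) ≤ m such that the characteristic polynomial of A + B equals q. -/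
open Polynomial Matrix


/-- The companion matrix of a monic polynomial `p` of degree `d`. -/
def companionMatrix {F : Type*} [Field F] (d : ℕ) (p : Polynomial F) :
    Matrix (Fin d) (Fin d) F :=
  Matrix.of fun i j =>
    if (j : ℕ) = d - 1 then -p.coeff i else if (i : ℕ) = (j : ℕ) + 1 then 1 else 0

theorem companionMatrix_apply {F : Type*} [Field F] (d : ℕ) (p : Polynomial F) (i j : Fin d) :
    companionMatrix d p i j =
      if (j : ℕ) = d - 1 then -p.coeff i else if (i : ℕ) = (j : ℕ) + 1 then 1 else 0 := rfl

theorem Polynomial.Monic.divX' {F : Type*} [Field F] {h : Polynomial F} (hm : h.Monic)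
    (hd : 1 ≤ h.natDegree) : h.divX.Monic := by
  have h1 : h.divX.natDegree = h.natDegree - 1 := natDegree_divX_eq_natDegree_tsub_one
  unfold Polynomial.Monic Polynomial.leadingCoeff
  rw [h1, coeff_divX, Nat.sub_add_cancel hd]
  exact hm

theorem charpoly_companionMatrix {F : Type*} [Field F] : ∀ (d : ℕ) (h : Polynomial F),
    h.Monic → h.natDegree = d → (companionMatrix d h).charpoly = h := by
  intro d
  induction d with
  | zero =>
    intro h hm hd
    rw [Matrix.charpoly, Matrix.det_isEmpty]
    exact ((Polynomial.Monic.natDegree_eq_zero hm).mp hd).symm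
  | succ k IH =>
    intro h hm hd
    have hdeg1 : 1 ≤ h.natDegree := by omega
    have hdivXdeg : h.divX.natDegree = k := by
      rw [natDegree_divX_eq_natDegree_tsub_one, hd]; omega
    have key : X * h.divX + C (h.coeff 0) = h := X_mul_divX_add h
    cases k with
    | zero =>
      rw [Matrix.charpoly, Matrix.det_fin_one, charmatrix_apply_eq, companionMatrix_apply]
      have hdivX1 : h.divX = 1 :=
        (Polynomial.Monic.natDegree_eq_zero (hm.divX' hdeg1)).mp hdivXdeg
      rw [hdivX1, mul_one] at key
      simp only [Fin.val_zero]
      norm_num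
      linear_combination key
    | succ k' =>
      have hcm : ∀ (i j : Fin (k'+2)), charmatrix (companionMatrix (k'+1+1) h) i j
          = (if i = j then X else 0)
            - C (if (j : ℕ) = k' + 1 then -h.coeff i else if (i : ℕ) = (j : ℕ) + 1 then 1 else 0) := by
        intro i j
        by_cases hij : i = j
        · subst hij
          rw [charmatrix_apply_eq, if_pos rfl, companionMatrix_apply]
          simp only [Nat.add_sub_cancel, Matrix.of_apply]
        · rw [charmatrix_apply_ne _ _ _ hij, if_neg hij, companionMatrix_apply]
          simp only [Nat.add_sub_cancel, zero_sub, Matrix.of_apply]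
      rw [Matrix.charpoly, Matrix.det_succ_row_zero]
      have hzero : ∀ j : Fin (k' + 2), j ≠ 0 → j ≠ Fin.last (k' + 1) →
          (-1 : Polynomial F) ^ (j : ℕ) * charmatrix (companionMatrix (k'+1+1) h) 0 j
            * det ((charmatrix (companionMatrix (k'+1+1) h)).submatrix Fin.succ j.succAbove) = 0 := by
        intro j hj0 hjl
        have hv0 : (j : ℕ) ≠ 0 := fun hc => hj0 (Fin.ext hc)
        have hvl : (j : ℕ) ≠ k' + 1 := fun hc => hjl (Fin.ext hc)
        have : charmatrix (companionMatrix (k'+1+1) h) 0 j = 0 := by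
          rw [hcm]
          rw [if_neg (by intro hc; exact hv0 (by rw [← hc, Fin.val_zero])),
            if_neg hvl, if_neg (by simp)]
          simp
        rw [this]; ring
      rw [← Finset.sum_subset (Finset.subset_univ {(0 : Fin (k'+2)), Fin.last (k'+1)})
        (fun j _ hj => by
          simp only [Finset.mem_insert, Finset.mem_singleton] at hj
          push_neg at hj
          exact hzero j hj.1 hj.2)]
      rw [Finset.sum_pair (by simp [Fin.ext_iff])]
      have hM00 : charmatrix (companionMatrix (k'+1+1) h) 0 0 = X := by
        rw [hcm]; norm_num
      have hM0l : charmatrix (companionMatrix (k'+1+1) h) 0 (Fin.last (k'+1)) = C (h.coeff 0) := by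
        rw [hcm]
        simp [Fin.ext_iff]
      have hminor0 : (charmatrix (companionMatrix (k'+1+1) h)).submatrix Fin.succ
            ((0 : Fin (k'+2)).succAbove)
          = charmatrix (companionMatrix (k'+1) h.divX) := by
        rw [Fin.succAbove_zero]
        ext i j
        rw [Matrix.submatrix_apply, hcm]
        by_cases hij : i = j
        · subst hij
          rw [charmatrix_apply_eq, if_pos rfl, companionMatrix_apply]
          congr 1
          have hc1 : ((i.succ : ℕ) = k' + 1) ↔ ((i : ℕ) = k' + 1 - 1) := by
            simp only [Fin.val_succ]; omega
          rw [if_congr hc1 rfl rfl]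
          by_cases hi : (i : ℕ) = k' + 1 - 1
          · rw [if_pos hi, if_pos hi, Fin.val_succ, coeff_divX]
          · rw [if_neg hi, if_neg hi, if_neg (by simp), if_neg (by simp)]
        · have hne : i.succ ≠ j.succ := by simpa [Fin.ext_iff] using hij
          rw [if_neg hne, charmatrix_apply_ne _ _ _ hij, companionMatrix_apply]
          have hc1 : ((j.succ : ℕ) = k' + 1) ↔ ((j : ℕ) = k' + 1 - 1) := by
            simp only [Fin.val_succ]; omega
          have hc2 : ((i.succ : ℕ) = (j.succ : ℕ) + 1) ↔ ((i : ℕ) = (j : ℕ) + 1) := by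
            simp only [Fin.val_succ]; omega
          rw [if_congr hc1 rfl rfl, if_congr hc2 rfl rfl]
          by_cases hj : (j : ℕ) = k' + 1 - 1
          · rw [if_pos hj, if_pos hj, Fin.val_succ, coeff_divX]
            ring
          · rw [if_neg hj, if_neg hj]
            ring
      have hminorl : det ((charmatrix (companionMatrix (k'+1+1) h)).submatrix Fin.succ
            ((Fin.last (k'+1)).succAbove))
          = (-1 : Polynomial F) ^ (k'+1) := by
        rw [Fin.succAbove_last]
        have htri : ((charmatrix (companionMatrix (k'+1+1) h)).submatrix Fin.succ
            Fin.castSucc).BlockTriangular id := by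
          intro i j hij
          have hlt : (j : ℕ) < (i : ℕ) := hij
          have hne : i.succ ≠ j.castSucc := by
            simp only [ne_eq, Fin.ext_iff, Fin.val_succ, Fin.coe_castSucc]; omega
          rw [Matrix.submatrix_apply, hcm, if_neg hne,
            if_neg (by simp only [Fin.coe_castSucc]; have := j.isLt; omega),
            if_neg (by simp only [Fin.val_succ, Fin.coe_castSucc]; omega)]
          simp
        rw [Matrix.det_of_upperTriangular htri]
        have hdiag : ∀ i : Fin (k'+1),
            ((charmatrix (companionMatrix (k'+1+1) h)).submatrix Fin.succ Fin.castSucc) i i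
            = -1 := by
          intro i
          have hne : i.succ ≠ i.castSucc := by
            simp only [ne_eq, Fin.ext_iff, Fin.val_succ, Fin.coe_castSucc]; omega
          rw [Matrix.submatrix_apply, hcm, if_neg hne,
            if_neg (by simp only [Fin.coe_castSucc]; have := i.isLt; omega),
            if_pos (by simp only [Fin.val_succ, Fin.coe_castSucc])]
          simp
        rw [Finset.prod_congr rfl (fun i _ => hdiag i)]
        simp
      rw [hM00, hM0l, hminor0, hminorl]
      have hIH : (charmatrix (companionMatrix (k'+1) h.divX)).det = h.divX :=
        IH h.divX (hm.divX' hdeg1) hdivXdeg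
      rw [hIH]
      have hsq : ((-1 : Polynomial F) ^ (k'+1)) * ((-1 : Polynomial F) ^ (k'+1)) = 1 := by
        rw [← pow_add]
        exact Even.neg_one_pow ⟨k'+1, by ring⟩
      calc (-1 : Polynomial F) ^ ((0 : Fin (k'+2)) : ℕ) * X * h.divX
            + (-1) ^ ((Fin.last (k'+1) : Fin (k'+2)) : ℕ) * C (h.coeff 0) * (-1) ^ (k'+1)
          = X * h.divX + ((-1 : Polynomial F) ^ (k'+1) * (-1 : Polynomial F) ^ (k'+1)) * C (h.coeff 0) := by
            simp only [Fin.val_zero, Fin.val_last, pow_zero, one_mul]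
            ring
        _ = h := by rw [hsq, one_mul, key]


def sigmaFiberEquiv {ι : Type*} {β : ι → Type*} (k : ι) :
    {a : Σ i, β i // a.1 = k} ≃ β k where
  toFun a := a.2 ▸ a.1.2
  invFun x := ⟨⟨k, x⟩, rfl⟩
  left_inv := by rintro ⟨⟨i, x⟩, rfl⟩; rfl
  right_inv := by intro x; rfl

theorem det_blockDiagonal'' {R : Type*} [CommRing R] {ι : Type*} [Fintype ι] [DecidableEq ι]
    [LinearOrder ι] {β : ι → Type*} [∀ i, Fintype (β i)] [∀ i, DecidableEq (β i)]
    (M : ∀ i, Matrix (β i) (β i) R) :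
    (blockDiagonal' M).det = ∏ i, (M i).det := by
  rw [Matrix.BlockTriangular.det_fintype (Matrix.blockTriangular_blockDiagonal' M)]
  refine Finset.prod_congr rfl fun k _ => ?_
  have : (blockDiagonal' M).toSquareBlock Sigma.fst k
      = (M k).submatrix (sigmaFiberEquiv k) (sigmaFiberEquiv k) := by
    apply Matrix.ext
    rintro ⟨⟨i, x⟩, hi⟩ ⟨⟨j, y⟩, hj⟩
    dsimp only at hi hj
    subst hi; subst hj
    exact blockDiagonal'_apply_eq M j x y
  rw [this, Matrix.det_submatrix_equiv_self]

theorem charmatrix_blockDiagonal' {R : Type*} [CommRing R] {ι : Type*} [Fintype ι]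
    [DecidableEq ι]
    {β : ι → Type*} [∀ i, Fintype (β i)] [∀ i, DecidableEq (β i)]
    (M : ∀ i, Matrix (β i) (β i) R) :
    charmatrix (blockDiagonal' M) = blockDiagonal' (fun i => charmatrix (M i)) := by
  apply Matrix.ext
  rintro ⟨i, x⟩ ⟨j, y⟩
  by_cases hij : i = j
  · subst hij
    rw [show blockDiagonal' (fun i => (M i).charmatrix) ⟨i, x⟩ ⟨i, y⟩
        = (M i).charmatrix x y from blockDiagonal'_apply_eq _ _ _ _]
    by_cases hxy : x = y
    · subst hxy
      rw [charmatrix_apply_eq, blockDiagonal'_apply_eq, charmatrix_apply_eq]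
    · have hne : (⟨i, x⟩ : Σ i, β i) ≠ ⟨i, y⟩ := by
        simp only [ne_eq, Sigma.mk.inj_iff, heq_eq_eq, true_and]; exact hxy
      rw [charmatrix_apply_ne _ _ _ hne, blockDiagonal'_apply_eq,
        charmatrix_apply_ne _ _ _ hxy]
  · have hne : (⟨i, x⟩ : Σ i, β i) ≠ ⟨j, y⟩ := by
      simp only [ne_eq, Sigma.mk.inj_iff]; tauto
    rw [show blockDiagonal' (fun i => (M i).charmatrix) ⟨i, x⟩ ⟨j, y⟩
        = 0 from blockDiagonal'_apply_ne _ _ _ hij]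
    rw [charmatrix_apply_ne _ _ _ hne, blockDiagonal'_apply_ne _ _ _ hij]
    simp

theorem charpoly_blockDiagonal' {R : Type*} [CommRing R] {ι : Type*} [Fintype ι] [DecidableEq ι]
    [LinearOrder ι] {β : ι → Type*} [∀ i, Fintype (β i)] [∀ i, DecidableEq (β i)]
    (M : ∀ i, Matrix (β i) (β i) R) :
    (blockDiagonal' M).charpoly = ∏ i, (M i).charpoly := by
  rw [Matrix.charpoly, charmatrix_blockDiagonal', det_blockDiagonal'']
  rfl


theorem charmatrix_apply' {R : Type*} [CommRing R] {k : Type*} [Fintype k] [DecidableEq k]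
    (M : Matrix k k R) (i j : k) :
    charmatrix M i j = (if i = j then (X : R[X]) else 0) - C (M i j) := by
  by_cases hij : i = j
  · subst hij; rw [charmatrix_apply_eq, if_pos rfl]
  · rw [charmatrix_apply_ne _ _ _ hij, if_neg hij, zero_sub]

theorem charpoly_conj {F : Type*} [Field F] {k : Type*} [Fintype k] [DecidableEq k]
    (P M : Matrix k k F) (hP : IsUnit P.det) :
    (P * M * P⁻¹).charpoly = M.charpoly := by
  have hPP : P * P⁻¹ = 1 := Matrix.mul_nonsing_inv P hP
  have hmap1 : (P.map (C : F →+* F[X])) * ((P⁻¹).map C) = 1 := by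
    rw [← Matrix.map_mul, hPP, Matrix.map_one _ (map_zero C) (map_one C)]
  have key : charmatrix (P * M * P⁻¹)
      = P.map C * charmatrix M * (P⁻¹).map C := by
    have h1 : ((C : F →+* F[X]).mapMatrix (P * M * P⁻¹) : Matrix k k F[X])
        = P.map C * (C : F →+* F[X]).mapMatrix M * (P⁻¹).map C := by
      simp only [RingHom.mapMatrix_apply, Matrix.map_mul]
    have hscal : (Matrix.scalar k) (X : F[X]) = (X : F[X]) • (1 : Matrix k k F[X]) := by
      rw [Matrix.smul_one_eq_diagonal]
      rfl
    rw [charmatrix, charmatrix, Matrix.mul_sub, Matrix.sub_mul, h1]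
    congr 1
    rw [hscal, Matrix.mul_smul, mul_one, Matrix.smul_mul, hmap1]
  have hdets : (P.map (C : F →+* F[X])).det * ((P⁻¹).map (C : F →+* F[X])).det = 1 := by
    rw [← Matrix.det_mul, hmap1, Matrix.det_one]
  rw [Matrix.charpoly, key, Matrix.det_mul, Matrix.det_mul]
  calc (P.map (C : F →+* F[X])).det * (charmatrix M).det * ((P⁻¹).map (C : F →+* F[X])).det
      = ((P.map (C : F →+* F[X])).det * ((P⁻¹).map (C : F →+* F[X])).det)
        * (charmatrix M).det := by ring
    _ = M.charpoly := by rw [hdets, one_mul]; rfl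

theorem rank_le_card_cols {F : Type*} [Field F] {k l : Type*} [Fintype k] [Fintype l]
    (M : Matrix k l F) (t : Finset l) (hcol : ∀ j ∉ t, ∀ i, M i j = 0) :
    M.rank ≤ t.card := by
  classical
  rw [Matrix.rank_eq_finrank_span_cols]
  have hsub : Set.range Mᵀ ⊆ insert 0 (↑(t.image Mᵀ) : Set (k → F)) := by
    rintro v ⟨j, rfl⟩
    by_cases hj : j ∈ t
    · exact Set.mem_insert_iff.mpr (Or.inr (by exact Finset.mem_coe.mpr (Finset.mem_image_of_mem _ hj)))
    · left
      funext i
      exact hcol j hj i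
  calc Module.finrank F (Submodule.span F (Set.range Mᵀ))
      ≤ Module.finrank F (Submodule.span F (insert 0 (↑(t.image Mᵀ) : Set (k → F)))) :=
        Submodule.finrank_mono (Submodule.span_mono hsub)
    _ = Module.finrank F (Submodule.span F (↑(t.image Mᵀ) : Set (k → F))) := by
        rw [Submodule.span_insert_zero]
    _ ≤ (t.image Mᵀ).card := finrank_span_finset_le_card _
    _ ≤ t.card := Finset.card_image_le


theorem lex_lt_iff' {s : ℕ} {d : Fin s → ℕ} (u v : Σ i : Fin s, Fin (d i)) :
    ((toLex u : Σₗ i : Fin s, Fin (d i)) < toLex v) ↔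
      ((u.1 : ℕ) < (v.1 : ℕ) ∨ ((u.1 : ℕ) = (v.1 : ℕ) ∧ (u.2 : ℕ) < (v.2 : ℕ))) := by
  obtain ⟨i, x⟩ := u
  obtain ⟨j, y⟩ := v
  rw [Sigma.Lex.lt_def]
  constructor
  · rintro (h | ⟨h1, h2⟩)
    · exact Or.inl h
    · right
      cases h1
      exact ⟨rfl, h2⟩
  · rintro (h | ⟨h1, h2⟩)
    · exact Or.inl (by exact_mod_cast h)
    · have hij : i = j := Fin.ext h1
      cases hij
      exact Or.inr ⟨rfl, by exact_mod_cast h2⟩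

/-- The tail index type: elements of the lex sigma type whose block index is `≥ r`. -/
def TailIdx {F : Type*} [Field F] {s : ℕ} (p : Fin s → Polynomial F) (r : ℕ) : Type _ :=
  {a : Σₗ i : Fin s, Fin ((p i).natDegree) // ¬ (((ofLex a).1 : ℕ) < r)}

noncomputable instance {F : Type*} [Field F] {s : ℕ} (p : Fin s → Polynomial F) (r : ℕ) :
    Fintype (TailIdx p r) := by
  unfold TailIdx; infer_instance

noncomputable instance {F : Type*} [Field F] {s : ℕ} (p : Fin s → Polynomial F) (r : ℕ) :
    LinearOrder (TailIdx p r) := by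
  unfold TailIdx; infer_instance

set_option maxHeartbeats 2000000 in
/-- Let `A` be an `n×n` matrix over a field `F` whose rational canonical form has invariant
factors `p 0 ∣ p 1 ∣ ⋯ ∣ p (s-1)`, let `m ≥ 1`, and let `q` be monic of degree `n` with
`p 0 · p 1 ⋯ p (s-m-1) ∣ q`.  Then there is an `n×n` matrix `B` over `F` with `rank B ≤ m`
and `charpoly (A + B) = q`. -/
theorem stmt_14 {F : Type*} [Field F] {n s m : ℕ} (hm : 1 ≤ m)
    (p : Fin s → Polynomial F) (hmon : ∀ i, (p i).Monic)
    (hdeg : ∀ i, 1 ≤ (p i).natDegree)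
    (hdvd : ∀ i j : Fin s, i ≤ j → p i ∣ p j)
    (A : Matrix (Fin n) (Fin n) F)
    (e : (Σ i : Fin s, Fin ((p i).natDegree)) ≃ Fin n)
    (P : Matrix (Fin n) (Fin n) F) (hP : IsUnit P.det)
    (hA : A = P * Matrix.reindex e e
      (Matrix.blockDiagonal' fun i => companionMatrix ((p i).natDegree) (p i)) * P⁻¹)
    (q : Polynomial F) (hq : q.Monic) (hqdeg : q.natDegree = n)
    (hdvdq : (∏ i ∈ Finset.univ.filter (fun i : Fin s => (i : ℕ) < s - m), p i) ∣ q) :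
    ∃ B : Matrix (Fin n) (Fin n) F, B.rank ≤ m ∧ (A + B).charpoly = q := by
  classical
  set r : ℕ := s - m with hr
  set g : Polynomial F := ∏ i ∈ Finset.univ.filter (fun i : Fin s => (i : ℕ) < r), p i with hg'
  have hgmon : g.Monic := Polynomial.monic_prod_of_monic _ _ (fun i _ => hmon i)
  set h : Polynomial F := q / g with hh'
  have hgh : g * h = q := EuclideanDomain.mul_div_cancel' hgmon.ne_zero hdvdq
  have hhmon : h.Monic := Polynomial.Monic.of_mul_monic_left hgmon (hgh ▸ hq)
  set D : ℕ := Fintype.card (TailIdx p r) with hD'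
  set τ0 : Fin D ≃o TailIdx p r := monoEquivOfFin _ rfl with hτ0
  -- the map from plain-sigma tail indices to `TailIdx`
  set τe : {a : (Σ i : Fin s, Fin ((p i).natDegree)) // ¬ ((a.1 : ℕ) < r)} ≃ TailIdx p r :=
    Equiv.subtypeEquiv (toLex : (Σ i : Fin s, Fin ((p i).natDegree)) ≃
      (Σₗ i : Fin s, Fin ((p i).natDegree))) (fun a => Iff.rfl) with hτe
  set τ : {a : (Σ i : Fin s, Fin ((p i).natDegree)) // ¬ ((a.1 : ℕ) < r)} ≃ Fin D :=
    τe.trans τ0.symm.toEquiv with hτ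
  set bd : Matrix (Σ i : Fin s, Fin ((p i).natDegree)) (Σ i : Fin s, Fin ((p i).natDegree)) F :=
    Matrix.blockDiagonal' (fun i => companionMatrix ((p i).natDegree) (p i)) with hbd
  set T : Matrix (Σ i : Fin s, Fin ((p i).natDegree)) (Σ i : Fin s, Fin ((p i).natDegree)) F :=
    Matrix.of (fun a b =>
      if hb : (b.1 : ℕ) < r then bd a b
      else if ha : (a.1 : ℕ) < r then 0
      else companionMatrix D h (τ ⟨a, ha⟩) (τ ⟨b, hb⟩)) with hT
  have hsumn : ∑ i : Fin s, (p i).natDegree = n := by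
    have hc := Fintype.card_congr e
    simpa [Fintype.card_sigma] using hc
  have hgdeg : g.natDegree
      = ∑ i ∈ Finset.univ.filter (fun i : Fin s => (i : ℕ) < r), (p i).natDegree := by
    rw [hg']
    exact Polynomial.natDegree_prod _ _ (fun i _ => (hmon i).ne_zero)
  have hDcard : D = ∑ i ∈ Finset.univ.filter (fun i : Fin s => ¬ ((i : ℕ) < r)),
      (p i).natDegree := by
    have h1 : D = Fintype.card {a : (Σ i : Fin s, Fin ((p i).natDegree)) // ¬ ((a.1 : ℕ) < r)} :=
      Fintype.card_congr τe.symm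
    rw [h1, Fintype.card_subtype]
    have h2 : Finset.univ.filter (fun a : (Σ i : Fin s, Fin ((p i).natDegree)) =>
          ¬ ((a.1 : ℕ) < r))
        = (Finset.univ.filter (fun i : Fin s => ¬ ((i : ℕ) < r))).sigma
          (fun i => Finset.univ) := by
      ext ⟨i, x⟩
      simp [Finset.mem_sigma]
    rw [h2, Finset.card_sigma]
    simp
  have hDdeg : h.natDegree = D := by
    have hmul : q.natDegree = g.natDegree + h.natDegree := by
      rw [← hgh]
      exact Polynomial.natDegree_mul hgmon.ne_zero hhmon.ne_zero
    have hsplit := Finset.sum_filter_add_sum_filter_not Finset.univ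
      (fun i : Fin s => (i : ℕ) < r) (fun i => (p i).natDegree)
    omega
  have hcharT : T.charpoly = q := by
    have hcross : ∀ a : (Σ i : Fin s, Fin ((p i).natDegree)), ¬ ((a.1 : ℕ) < r) →
        ∀ b : (Σ i : Fin s, Fin ((p i).natDegree)), (b.1 : ℕ) < r → charmatrix T a b = 0 := by
      intro a ha b hb
      have hab : a ≠ b := by
        intro hc; rw [hc] at ha; exact ha hb
      rw [charmatrix_apply_ne _ _ _ hab]
      have hTv : T a b = bd a b := by
        show dite _ _ _ = _
        rw [dif_pos hb]
      rw [hTv, hbd, blockDiagonal'_apply_ne _ _ _ (by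
        intro hc
        rw [hc] at ha
        exact ha hb)]
      simp
    have hdet2 := Matrix.twoBlockTriangular_det (charmatrix T)
      (fun a => (a.1 : ℕ) < r) hcross
    let η : {a : (Σ i : Fin s, Fin ((p i).natDegree)) // (a.1 : ℕ) < r}
        ≃ Σ i : {i : Fin s // (i : ℕ) < r}, Fin ((p i.1).natDegree) :=
      { toFun := fun a => ⟨⟨a.1.1, a.2⟩, a.1.2⟩
        invFun := fun x => ⟨⟨x.1.1, x.2⟩, x.1.2⟩
        left_inv := fun ⟨⟨i, v⟩, hi⟩ => rfl
        right_inv := fun ⟨⟨i, hi⟩, v⟩ => rfl }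
    have hheadM : (charmatrix T).toSquareBlockProp (fun a => (a.1 : ℕ) < r)
        = (charmatrix (blockDiagonal' (fun i : {i : Fin s // (i : ℕ) < r} =>
            companionMatrix ((p i.1).natDegree) (p i.1)))).submatrix η η := by
      apply Matrix.ext
      rintro ⟨⟨i, x⟩, hi⟩ ⟨⟨j, y⟩, hj⟩
      show charmatrix T ⟨i, x⟩ ⟨j, y⟩ = charmatrix _ (η ⟨⟨i, x⟩, hi⟩) (η ⟨⟨j, y⟩, hj⟩)
      rw [charmatrix_apply', charmatrix_apply']
      have hTv : T ⟨i, x⟩ ⟨j, y⟩ = bd ⟨i, x⟩ ⟨j, y⟩ := by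
        show dite _ _ _ = _
        rw [dif_pos hj]
      rw [hTv]
      congr 1
      · apply if_congr _ rfl rfl
        simp only [η, Equiv.coe_fn_mk, Sigma.mk.inj_iff, Subtype.mk.injEq]
      · congr 1
        by_cases hij : i = j
        · subst hij
          have h1 : bd ⟨i, x⟩ ⟨i, y⟩ = companionMatrix ((p i).natDegree) (p i) x y :=
            blockDiagonal'_apply_eq _ _ _ _
          have h2 : blockDiagonal' (fun i : {i : Fin s // (i : ℕ) < r} =>
                companionMatrix ((p i.1).natDegree) (p i.1)) ⟨⟨i, hi⟩, x⟩ ⟨⟨i, hj⟩, y⟩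
              = companionMatrix ((p i).natDegree) (p i) x y :=
            blockDiagonal'_apply_eq _ _ _ _
          exact h1.trans h2.symm
        · rw [hbd, blockDiagonal'_apply_ne _ _ _ hij,
            blockDiagonal'_apply_ne _ _ _ (by
              intro hc
              exact hij (congrArg Subtype.val hc))]
    have hheaddet : ((charmatrix T).toSquareBlockProp (fun a => (a.1 : ℕ) < r)).det = g := by
      rw [hheadM, Matrix.det_submatrix_equiv_self]
      show (blockDiagonal' (fun i : {i : Fin s // (i : ℕ) < r} =>
          companionMatrix ((p i.1).natDegree) (p i.1))).charpoly = g
      rw [charpoly_blockDiagonal']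
      have h1 : ∀ i : {i : Fin s // (i : ℕ) < r},
          (companionMatrix ((p i.1).natDegree) (p i.1)).charpoly = p i.1 := fun i =>
        charpoly_companionMatrix _ _ (hmon i.1) rfl
      rw [Finset.prod_congr rfl (fun i _ => h1 i), hg']
      exact (Finset.prod_subtype _ (by simp) p).symm
    have htailM : (charmatrix T).toSquareBlockProp (fun a => ¬ ((a.1 : ℕ) < r))
        = (charmatrix (companionMatrix D h)).submatrix τ τ := by
      apply Matrix.ext
      rintro ⟨a, ha⟩ ⟨b, hb⟩
      show charmatrix T a b = charmatrix (companionMatrix D h) (τ ⟨a, ha⟩) (τ ⟨b, hb⟩)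
      rw [charmatrix_apply', charmatrix_apply']
      congr 1
      · apply if_congr _ rfl rfl
        constructor
        · rintro rfl; rfl
        · intro hc
          have := τ.injective hc
          exact congrArg Subtype.val this
      · congr 1
        show dite _ _ _ = _
        rw [dif_neg hb, dif_neg ha]
    have htaildet : ((charmatrix T).toSquareBlockProp (fun a => ¬ ((a.1 : ℕ) < r))).det = h := by
      rw [htailM, Matrix.det_submatrix_equiv_self]
      exact charpoly_companionMatrix D h hhmon hDdeg
    show (charmatrix T).det = q
    rw [hdet2, hheaddet, htaildet, hgh]
  refine ⟨P * (Matrix.reindex e e (T - bd)) * P⁻¹, ?_, ?_⟩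
  · -- rank bound
    have hmono_iff : ∀ u v : {a : (Σ i : Fin s, Fin ((p i).natDegree)) // ¬ ((a.1 : ℕ) < r)},
        τ u < τ v ↔
          (toLex u.1 : Σₗ i : Fin s, Fin ((p i).natDegree))
            < (toLex v.1 : Σₗ i : Fin s, Fin ((p i).natDegree)) := by
      intro u v
      show τ0.symm (τe u) < τ0.symm (τe v) ↔ _
      rw [OrderIso.lt_iff_lt]
      exact Iff.rfl
    set t : Finset (Σ i : Fin s, Fin ((p i).natDegree)) :=
      Finset.univ.filter (fun b => ¬ ((b.1 : ℕ) < r) ∧ (b.2 : ℕ) = (p b.1).natDegree - 1)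
      with ht
    have hcols : ∀ b ∉ t, ∀ a, (T - bd) a b = 0 := by
      intro b hbmem a
      have hcases : ¬ (¬ ((b.1 : ℕ) < r) ∧ (b.2 : ℕ) = (p b.1).natDegree - 1) := fun hc =>
        hbmem (Finset.mem_filter.mpr ⟨Finset.mem_univ _, hc⟩)
      rw [Matrix.sub_apply, sub_eq_zero]
      by_cases hbt : (b.1 : ℕ) < r
      · show dite _ _ _ = _
        rw [dif_pos hbt]
      · have hb2 : (b.2 : ℕ) ≠ (p b.1).natDegree - 1 := fun hc => hcases ⟨hbt, hc⟩
        by_cases hat : (a.1 : ℕ) < r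
        · have hTv : T a b = 0 := by
            show dite _ _ _ = _
            rw [dif_neg hbt, dif_pos hat]
          rw [hTv, hbd, blockDiagonal'_apply_ne _ _ _ (by
            intro hc
            rw [hc] at hat
            exact hbt hat)]
        · -- both tail
          obtain ⟨j, y⟩ := b
          have hy1 : (y : ℕ) + 1 < (p j).natDegree := by
            have h1 := y.isLt
            have h2 : (y : ℕ) ≠ (p j).natDegree - 1 := hb2
            omega
          set y1 : Fin ((p j).natDegree) := ⟨(y : ℕ) + 1, hy1⟩ with hy1'
          set sb : {x : (Σ i : Fin s, Fin ((p i).natDegree)) // ¬ ((x.1 : ℕ) < r)} :=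
            ⟨⟨j, y⟩, hbt⟩ with hsb
          set sb' : {x : (Σ i : Fin s, Fin ((p i).natDegree)) // ¬ ((x.1 : ℕ) < r)} :=
            ⟨⟨j, y1⟩, hbt⟩ with hsb'
          set sa : {x : (Σ i : Fin s, Fin ((p i).natDegree)) // ¬ ((x.1 : ℕ) < r)} :=
            ⟨a, hat⟩ with hsa
          have hlex1 : (toLex sb.1 : Σₗ i : Fin s, Fin ((p i).natDegree)) < toLex sb'.1 :=
            (lex_lt_iff' _ _).mpr (Or.inr ⟨rfl, Nat.lt_succ_self _⟩)
          have hstep : ∀ c : {x : (Σ i : Fin s, Fin ((p i).natDegree)) // ¬ ((x.1 : ℕ) < r)},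
              (toLex sb.1 : Σₗ i : Fin s, Fin ((p i).natDegree)) < toLex c.1 →
              ¬ ((toLex c.1 : Σₗ i : Fin s, Fin ((p i).natDegree)) < toLex sb'.1) := by
            rintro ⟨⟨jc, yc⟩, hc⟩ hlt hlt'
            rw [lex_lt_iff'] at hlt hlt'
            simp only [hsb, hsb', hy1'] at hlt hlt'
            have e1 : ((sb.1.1 : Fin s) : ℕ) = (j : ℕ) := rfl
            have e2 : ((sb'.1.1 : Fin s) : ℕ) = (j : ℕ) := rfl
            have e3 : ((sb.1.2 : Fin _) : ℕ) = (y : ℕ) := rfl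
            have e4 : ((sb'.1.2 : Fin _) : ℕ) = (y : ℕ) + 1 := rfl
            omega
          have hττ : τ sb < τ sb' := (hmono_iff _ _).mpr hlex1
          have horder : ((τ sb' : Fin D) : ℕ) = ((τ sb : Fin D) : ℕ) + 1 := by
            by_contra hc
            have hlt2 : ((τ sb : Fin D) : ℕ) + 1 < ((τ sb' : Fin D) : ℕ) := by
              have := hττ
              rw [Fin.lt_def] at this
              omega
            set c := τ.symm ⟨((τ sb : Fin D) : ℕ) + 1, lt_trans hlt2 (τ sb').isLt⟩ with hc'
            have hτc : ((τ c : Fin D) : ℕ) = ((τ sb : Fin D) : ℕ) + 1 := by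
              rw [hc', Equiv.apply_symm_apply]
            have h1 : τ sb < τ c := by rw [Fin.lt_def, hτc]; omega
            have h2 : τ c < τ sb' := by rw [Fin.lt_def, hτc]; omega
            exact hstep c ((hmono_iff _ _).mp h1) ((hmono_iff _ _).mp h2)
          have hne_last : ((τ sb : Fin D) : ℕ) ≠ D - 1 := by
            have h1 := (τ sb').isLt
            omega
          have hTv : T a ⟨j, y⟩ = companionMatrix D h (τ sa) (τ sb) := by
            show dite _ _ _ = _
            rw [dif_neg hbt, dif_neg hat]
          rw [hTv, companionMatrix_apply, if_neg hne_last]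
          have hiff : (((τ sa : Fin D) : ℕ) = ((τ sb : Fin D) : ℕ) + 1) ↔ a = ⟨j, y1⟩ := by
            rw [← horder]
            constructor
            · intro hc
              have : τ sa = τ sb' := Fin.ext hc
              have := τ.injective this
              exact congrArg Subtype.val this
            · intro hc
              have : sa = sb' := Subtype.ext hc
              rw [this]
          obtain ⟨i, x⟩ := a
          by_cases hij : i = j
          · subst hij
            have hbdv : bd ⟨i, x⟩ ⟨i, y⟩ = companionMatrix ((p i).natDegree) (p i) x y :=
              blockDiagonal'_apply_eq _ _ _ _
            rw [hbdv, companionMatrix_apply, if_neg hb2]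
            have hiff2 : ((x : ℕ) = (y : ℕ) + 1) ↔ (⟨i, x⟩ : Σ i : Fin s, Fin ((p i).natDegree))
                = ⟨i, y1⟩ := by
              constructor
              · intro hc
                have : x = y1 := Fin.ext hc
                rw [this]
              · intro hc
                have : x = y1 := by
                  simpa [Sigma.mk.inj_iff] using hc
                rw [this]
            rw [if_congr (hiff.trans hiff2.symm) rfl rfl]
          · rw [hbd, blockDiagonal'_apply_ne _ _ _ hij, if_neg (by
              intro hc
              have := hiff.mp hc
              exact hij (congrArg Sigma.fst this))]
    have hrank1 : (P * (Matrix.reindex e e (T - bd)) * P⁻¹).rank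
        ≤ (T - bd).rank := by
      calc (P * (Matrix.reindex e e (T - bd)) * P⁻¹).rank
          ≤ (P * (Matrix.reindex e e (T - bd))).rank := Matrix.rank_mul_le_left _ _
        _ ≤ (Matrix.reindex e e (T - bd)).rank := Matrix.rank_mul_le_right _ _
        _ = (T - bd).rank := by rw [Matrix.rank_reindex]
    have hrank2 : (T - bd).rank ≤ t.card := rank_le_card_cols _ t hcols
    have hcardt : t.card ≤ m := by
      have hinj : Set.InjOn (Sigma.fst : (Σ i : Fin s, Fin ((p i).natDegree)) → Fin s)
          (↑t : Set (Σ i : Fin s, Fin ((p i).natDegree))) := by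
        rintro ⟨i1, x1⟩ h1 ⟨i2, x2⟩ h2 hfst
        simp only [ht, Finset.coe_filter, Set.mem_setOf_eq] at h1 h2
        dsimp at hfst
        subst hfst
        have : (x1 : ℕ) = (x2 : ℕ) := by rw [h1.2.2, h2.2.2]
        exact congrArg _ (Fin.ext this)
      have h1 : t.card ≤ (t.image Sigma.fst).card :=
        le_of_eq (Finset.card_image_of_injOn hinj).symm
      have h2 : (t.image Sigma.fst) ⊆ Finset.univ.filter (fun i : Fin s => ¬ ((i : ℕ) < r)) := by
        intro i hi
        obtain ⟨b, hbmem, rfl⟩ := Finset.mem_image.mp hi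
        simp only [ht, Finset.mem_filter, Finset.mem_univ, true_and] at hbmem ⊢
        exact hbmem.1
      have h3 : (Finset.univ.filter (fun i : Fin s => ¬ ((i : ℕ) < r))).card ≤ m := by
        have hrs : r ≤ s := Nat.sub_le _ _
        have h5 : (Finset.univ : Finset (Fin r)).card
            ≤ (Finset.univ.filter (fun i : Fin s => (i : ℕ) < r)).card := by
          apply Finset.card_le_card_of_injOn
            (fun i : Fin r => (⟨(i : ℕ), lt_of_lt_of_le i.isLt hrs⟩ : Fin s))
          · intro i _
            simp [i.isLt]
          · intro a _ b _ hab
            have := congrArg Fin.val hab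
            exact Fin.ext this
        have h6 := Finset.card_filter_add_card_filter_not
          (s := (Finset.univ : Finset (Fin s))) (p := fun i : Fin s => (i : ℕ) < r)
        simp only [Finset.card_univ, Fintype.card_fin] at h5 h6
        omega
      exact le_trans h1 (le_trans (Finset.card_le_card h2) h3)
    exact le_trans hrank1 (le_trans hrank2 hcardt)
  · -- charpoly
    have hsum : A + P * (Matrix.reindex e e (T - bd)) * P⁻¹
        = P * (Matrix.reindex e e T) * P⁻¹ := by
      rw [hA, ← Matrix.add_mul, ← Matrix.mul_add]
      congr 2
      ext a b
      simp only [Matrix.reindex_apply, Matrix.submatrix_apply, Matrix.add_apply,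
        Matrix.sub_apply]
      ring
    rw [hsum, charpoly_conj _ _ hP, Matrix.charpoly_reindex, hcharT]
end
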